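/- Let f > 0 and let r* be the unique real number in (1 + f, ∞) with (1 + f) · ln(r*) = r* − 1 − f. Then for every real r > 1 + f, one has r · ln(r)/(r − 1 − f) ≥ r*/(1 + f), with equality if and only if r = r*. In other words, the function r ↦ r·ln(r)/(r−1−f) attains its minimum over (1+f, ∞) precisely at r = r*, and the minimum value equals r*/(1+f). -/

import Mathlib

/-- The competitive ratio `r·ln(r)/(r-1-f)` of RandAlg(r) is minimized over
`(1+f, ∞)` exactly at the solution `r*` of `(1+f)·ln(r*) = r* - 1 - f`, with
minimum value `r*/(1+f)`. -/
theorem stmt_7 (f rs : ℝ) (hf : 0 < f) (hrs : rs ∈ Set.Ioi (1 + f))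
    (heq : (1 + f) * Real.log rs = rs - 1 - f) :
    ∀ r : ℝ, 1 + f < r →
      rs / (1 + f) ≤ r * Real.log r / (r - 1 - f) ∧
      (r * Real.log r / (r - 1 - f) = rs / (1 + f) ↔ r = rs) := by
  have h1f : (0:ℝ) < 1 + f := by linarith
  have hrs1 : 1 + f < rs := hrs
  have hrs0 : (0:ℝ) < rs := by linarith
  have hlogpos : 0 < Real.log rs := Real.log_pos (by linarith)
  have hkey : (1 + f) * (Real.log rs + 1) = rs := by
    have : (1+f) * (Real.log rs + 1) = (1+f) * Real.log rs + (1+f) := by ring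
    rw [this, heq]; ring
  set h : ℝ → ℝ := fun x => (1+f)*(x*Real.log x) - rs*x with hh
  have hderiv : ∀ x : ℝ, 0 < x →
      HasDerivAt h ((1+f)*(Real.log x + 1) - rs) x := by
    intro x hx
    have h1 := (Real.hasDerivAt_mul_log (ne_of_gt hx)).const_mul (1+f)
    have h2 : HasDerivAt (fun y : ℝ => rs * y) rs x := by
      simpa using (hasDerivAt_id x).const_mul rs
    exact h1.sub h2
  have hmain : ∀ r, 1 + f < r → r ≠ rs → h rs < h r := by
    intro r hr hne
    rcases lt_or_gt_of_ne hne with hlt | hgt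
    · have hanti := strictAntiOn_of_deriv_neg (convex_Icc r rs)
        (fun x hx => ((hderiv x (by have := hx.1; linarith)).continuousAt).continuousWithinAt)
        (fun x hx => by
          rw [interior_Icc] at hx
          have hx0 : 0 < x := by have := hx.1; linarith
          rw [(hderiv x hx0).deriv]
          have hlt2 : Real.log x < Real.log rs := Real.log_lt_log hx0 hx.2
          nlinarith)
      exact hanti (Set.left_mem_Icc.2 (le_of_lt hlt)) (Set.right_mem_Icc.2 (le_of_lt hlt)) hlt
    · have hmono := strictMonoOn_of_deriv_pos (convex_Icc rs r)
        (fun x hx => ((hderiv x (by have := hx.1; linarith)).continuousAt).continuousWithinAt)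
        (fun x hx => by
          rw [interior_Icc] at hx
          have hx0 : 0 < x := by have := hx.1; linarith
          rw [(hderiv x hx0).deriv]
          have hlt2 : Real.log rs < Real.log x := Real.log_lt_log hrs0 hx.1
          nlinarith)
      exact hmono (Set.left_mem_Icc.2 (le_of_lt hgt)) (Set.right_mem_Icc.2 (le_of_lt hgt)) hgt
  have hrsval : h rs = -(rs * (1+f)) := by
    simp only [hh]
    nlinarith [heq]
  intro r hr
  have hr0 : (0:ℝ) < r := by linarith
  have hden : 0 < r - 1 - f := by linarith
  by_cases hne : r = rs
  · subst hne
    have heq2 : r * Real.log r / (r - 1 - f) = r / (1 + f) := by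
      rw [← heq]
      rw [mul_comm (1+f) (Real.log r)]
      rw [mul_comm r (Real.log r)]
      rw [mul_div_mul_left _ _ (ne_of_gt hlogpos)]
    exact ⟨le_of_eq heq2.symm, by simp [heq2]⟩
  · have hstrict : h rs < h r := hmain r hr hne
    have hstrict' : rs * (r - 1 - f) < (r * Real.log r) * (1 + f) := by
      simp only [hh] at hstrict
      nlinarith [heq]
    constructor
    · rw [div_le_div_iff₀ h1f hden]
      linarith
    · constructor
      · intro heq3
        exfalso
        rw [div_eq_div_iff (ne_of_gt hden) (ne_of_gt h1f)] at heq3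
        linarith
      · intro heq3; exact absurd heq3 hne
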